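/- Let N ≥ 2 be an integer, θ > 0, σ > 0, α ∈ (0,1), β := 1 − α, and γ(k) := (σ²/(2θ))·e^{−(θ/N)·k}. Let X_1, …, X_N be square-integrable real random variables with E[X_t] = m*_t for real numbers m*_1, …, m*_N, and Cov(X_t, X_s) = (σ²/(2θ))·e^{−(θ/N)|t−s|} for all t, s ∈ {1,…,N}. Define m̂_1 := X_1 and m̂_t := (1−α)·m̂_{t−1} + α·X_t for t ∈ {2,…,N}. Then for every t ∈ {2,…,N}: E[(m̂_{t−1} − m*_t)·(X_t − m*_t)] = β^{t−2}·γ(t−1) + α·∑_{j=2}^{t−1} β^{t−1−j}·γ(t−j). -/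

import Mathlib

open MeasureTheory Real

lemma l2_mul_integrable {Ω : Type*} [MeasurableSpace Ω] {μ : Measure Ω}
    {f g : Ω → ℝ} (hf : MemLp f 2 μ) (hg : MemLp g 2 μ) :
    Integrable (fun ω => f ω * g ω) μ := by
  have h := hf.smul (r := 1) hg
  rw [memLp_one_iff_integrable] at h
  simpa [Pi.smul_apply, smul_eq_mul, mul_comm, Pi.mul_def] using h

/-- Cross-covariance between the current exponential smoothing estimate and the
next observation:
`E[(m̂_{t−1} − m*_t)(X_t − m*_t)] = β^{t−2} γ(t−1) + α ∑_{j=2}^{t−1} β^{t−1−j} γ(t−j)`. -/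
theorem cross_covariance_estimate_observation
    {Ω : Type*} [MeasurableSpace Ω] (μ : Measure Ω) [IsProbabilityMeasure μ]
    (N : ℕ) (hN : 2 ≤ N) (θ σ α β : ℝ) (hθ : 0 < θ) (hσ : 0 < σ)
    (hα : α ∈ Set.Ioo (0 : ℝ) 1) (hβ : β = 1 - α)
    (γ : ℕ → ℝ) (hγ : ∀ k, γ k = σ ^ 2 / (2 * θ) * Real.exp (-(θ / N) * (k : ℝ)))
    (X : ℕ → Ω → ℝ) (m : ℕ → ℝ)
    (hL2 : ∀ t, 1 ≤ t → t ≤ N → MemLp (X t) 2 μ)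
    (hmean : ∀ t, 1 ≤ t → t ≤ N → ∫ ω, X t ω ∂μ = m t)
    (hcov : ∀ t s, 1 ≤ t → t ≤ N → 1 ≤ s → s ≤ N →
      ∫ ω, (X t ω - m t) * (X s ω - m s) ∂μ
        = σ ^ 2 / (2 * θ) * Real.exp (-(θ / N) * |(t : ℝ) - (s : ℝ)|))
    (mhat : ℕ → Ω → ℝ)
    (hm1 : ∀ ω, mhat 1 ω = X 1 ω)
    (hmt : ∀ t, 2 ≤ t → t ≤ N → ∀ ω,
      mhat t ω = (1 - α) * mhat (t - 1) ω + α * X t ω) :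
    ∀ t, 2 ≤ t → t ≤ N →
      ∫ ω, (mhat (t - 1) ω - m t) * (X t ω - m t) ∂μ
        = β ^ (t - 2) * γ (t - 1)
          + α * ∑ j ∈ Finset.Icc 2 (t - 1), β ^ (t - 1 - j) * γ (t - j) := by
  -- pointwise representation of mhat
  have decomp : ∀ s, 1 ≤ s → s ≤ N → ∀ ω,
      mhat s ω = β ^ (s - 1) * X 1 ω
        + α * ∑ j ∈ Finset.Icc 2 s, β ^ (s - j) * X j ω := by
    intro s hs1
    induction s, hs1 using Nat.le_induction with
    | base => intro _ ω; simp [hm1 ω, Finset.Icc_eq_empty_of_lt]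
    | succ s hs ih =>
      intro hsN ω
      have hsN' : s ≤ N := by omega
      rw [hmt (s + 1) (by omega) hsN ω]
      simp only [Nat.add_sub_cancel]
      rw [ih hsN' ω, ← hβ]
      have hins : Finset.Icc 2 (s + 1) = insert (s + 1) (Finset.Icc 2 s) := by
        ext x; simp [Finset.mem_Icc]; omega
      rw [hins, Finset.sum_insert (by simp)]
      have key : ∑ j ∈ Finset.Icc 2 s, β ^ (s + 1 - j) * X j ω
          = β * ∑ j ∈ Finset.Icc 2 s, β ^ (s - j) * X j ω := by
        rw [Finset.mul_sum]
        refine Finset.sum_congr rfl fun j hj => ?_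
        simp only [Finset.mem_Icc] at hj
        rw [show s + 1 - j = (s - j) + 1 from by omega, pow_succ]; ring
      have key1 : β ^ s = β * β ^ (s - 1) := by
        conv_lhs => rw [show s = (s - 1) + 1 from by omega]
        rw [pow_succ]; ring
      rw [Nat.sub_self, pow_zero, one_mul, key, key1]; ring
  intro t ht2 htN
  set s := t - 1 with hsdef
  have hs1 : 1 ≤ s := by omega
  have hsN : s ≤ N := by omega
  -- centered variables
  set Y : ℕ → Ω → ℝ := fun j ω => X j ω - m j with hY
  have hYL2 : ∀ j, 1 ≤ j → j ≤ N → MemLp (Y j) 2 μ := fun j h1 h2 =>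
    (hL2 j h1 h2).sub (memLp_const (m j))
  have hYint : ∀ j, 1 ≤ j → j ≤ N → Integrable (Y j) μ :=
    fun j h1 h2 => (hYL2 j h1 h2).integrable one_le_two
  have hYmean : ∀ j, 1 ≤ j → j ≤ N → ∫ ω, Y j ω ∂μ = 0 := by
    intro j h1 h2
    have : ∫ ω, (X j ω - m j) ∂μ = (∫ ω, X j ω ∂μ) - ∫ _, m j ∂μ :=
      integral_sub ((hL2 j h1 h2).integrable one_le_two) (integrable_const _)
    simp [hY, this, hmean j h1 h2]
  set C : ℝ := β ^ (s - 1) * m 1 + α * ∑ j ∈ Finset.Icc 2 s, β ^ (s - j) * m j - m t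
    with hC
  -- pointwise rewriting of the integrand
  have hpt : ∀ ω, (mhat s ω - m t) * (X t ω - m t)
      = β ^ (s - 1) * (Y 1 ω * Y t ω)
        + α * ∑ j ∈ Finset.Icc 2 s, β ^ (s - j) * (Y j ω * Y t ω)
        + C * Y t ω := by
    intro ω
    rw [decomp s hs1 hsN ω]
    simp only [hY, hC]
    have e1 : ∑ j ∈ Finset.Icc 2 s, β ^ (s - j) * ((X j ω - m j) * (X t ω - m t))
        = (∑ j ∈ Finset.Icc 2 s, β ^ (s - j) * X j ω
            - ∑ j ∈ Finset.Icc 2 s, β ^ (s - j) * m j) * (X t ω - m t) := by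
      rw [← Finset.sum_sub_distrib, Finset.sum_mul]
      exact Finset.sum_congr rfl (fun j _ => by ring)
    rw [e1]; ring
  rw [integral_congr_ae (Filter.Eventually.of_forall hpt)]
  -- integrability facts
  have hint1 : Integrable (fun ω => β ^ (s - 1) * (Y 1 ω * Y t ω)) μ :=
    (l2_mul_integrable (hYL2 1 (le_refl 1) (by omega)) (hYL2 t (by omega) htN)).const_mul _
  have hintj : ∀ j ∈ Finset.Icc 2 s,
      Integrable (fun ω => β ^ (s - j) * (Y j ω * Y t ω)) μ := by
    intro j hj
    simp only [Finset.mem_Icc] at hj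
    exact (l2_mul_integrable (hYL2 j (by omega) (by omega))
      (hYL2 t (by omega) htN)).const_mul _
  have hint2 : Integrable (fun ω => ∑ j ∈ Finset.Icc 2 s, β ^ (s - j) * (Y j ω * Y t ω)) μ :=
    integrable_finset_sum _ hintj
  have hint3 : Integrable (fun ω => C * Y t ω) μ :=
    (hYint t (by omega) htN).const_mul _
  have hA : Integrable (fun ω => β ^ (s - 1) * (Y 1 ω * Y t ω)
      + α * ∑ j ∈ Finset.Icc 2 s, β ^ (s - j) * (Y j ω * Y t ω)) μ :=
    hint1.add (hint2.const_mul α)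
  rw [integral_add hA hint3,
      integral_add hint1 (hint2.const_mul α),
      integral_const_mul, integral_const_mul, integral_const_mul,
      integral_finset_sum _ hintj]
  simp only [integral_const_mul]
  rw [hYmean t (by omega) htN, mul_zero, add_zero]
  -- evaluate covariances
  have hgam : ∀ j, 1 ≤ j → j ≤ s → ∫ ω, Y j ω * Y t ω ∂μ = γ (t - j) := by
    intro j h1 h2
    have := hcov j t h1 (by omega) (by omega) htN
    rw [hγ (t - j)]
    have habs : |(j : ℝ) - (t : ℝ)| = ((t - j : ℕ) : ℝ) := by
      rw [abs_sub_comm, Nat.cast_sub (by omega)]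
      rw [abs_of_nonneg]
      have : (j : ℝ) ≤ (t : ℝ) := Nat.cast_le.mpr (by omega)
      linarith
    rw [← habs]
    exact this
  rw [hgam 1 (le_refl 1) hs1]
  have hsum2 : ∀ j ∈ Finset.Icc 2 s,
      β ^ (s - j) * ∫ ω, Y j ω * Y t ω ∂μ = β ^ (s - j) * γ (t - j) := by
    intro j hj
    simp only [Finset.mem_Icc] at hj
    rw [hgam j (by omega) hj.2]
  rw [Finset.sum_congr rfl hsum2, show s - 1 = t - 2 from by omega, hsdef]
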